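/- Under the no-bottleneck assumption (every demand magnitude is at most C_min = min_t C_t), in any feasible solution to the complex-demand scheduling problem with all demand arguments in [0, φ], φ ≤ π/2, the number of selected δ-large demands whose intervals contain any fixed time slot t is at most 2⌊(1/δ²)·sec(φ/2)⌋. -/

import Mathlib

open scoped Classical

lemma rot_re {φ : ℝ} (hφ0 : 0 ≤ φ) (hφ : φ ≤ Real.pi / 2) (z : ℂ)
    (h1 : 0 ≤ z.arg) (h2 : z.arg ≤ φ) :
    Real.cos (φ/2) * ‖z‖ ≤ (Complex.exp (-(↑(φ/2)) * Complex.I) * z).re := by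
  have hz := Complex.norm_mul_exp_arg_mul_I z
  have hexp : Complex.exp (-(↑(φ/2)) * Complex.I) * Complex.exp (↑z.arg * Complex.I)
      = Complex.exp (↑(z.arg - φ/2) * Complex.I) := by
    rw [← Complex.exp_add]; congr 1; push_cast; ring
  calc Real.cos (φ/2) * ‖z‖
      ≤ Real.cos (z.arg - φ/2) * ‖z‖ := by
        apply mul_le_mul_of_nonneg_right _ (norm_nonneg z)
        rw [← Real.cos_abs (z.arg - φ/2)]
        apply Real.cos_le_cos_of_nonneg_of_le_pi (abs_nonneg _)
        · linarith [Real.pi_pos]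
        · rw [abs_le]; constructor <;> linarith
    _ = (Complex.exp (-(↑(φ/2)) * Complex.I) * z).re := by
        conv_rhs => rw [← hz]
        rw [mul_left_comm, hexp, Complex.re_ofReal_mul, Complex.exp_ofReal_mul_I_re]
        ring

lemma group_bound {m N : ℕ} {s : Fin N → ℂ} {T : Fin N → Finset (Fin m)}
    {C : Fin m → ℝ} {Cmin : ℝ} (hCmin : IsLeast (Set.range C) Cmin)
    (hNBA : ∀ j, ‖s j‖ ≤ Cmin)
    {b : Fin N → Fin m} {φ δ : ℝ} (hφ0 : 0 ≤ φ) (hφ : φ ≤ Real.pi / 2) (hδ : 0 < δ)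
    (harg : ∀ j, 0 ≤ (s j).arg ∧ (s j).arg ≤ φ)
    {S : Finset (Fin N)}
    (hfeas : ∀ t, ‖∑ j ∈ S.filter (fun j => t ∈ T j), s j‖ ≤ C t)
    {G : Finset (Fin N)} (hGS : G ⊆ S)
    (hlarge : ∀ j ∈ G, δ * C (b j) < ‖s j‖)
    {j0 : Fin N} (hj0 : j0 ∈ G) (hmem : ∀ j ∈ G, b j0 ∈ T j) :
    (G.card : ℝ) ≤ (1 / δ ^ 2) * (1 / Real.cos (φ / 2)) := by
  have hcosp : 0 < Real.cos (φ / 2) := by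
    apply Real.cos_pos_of_mem_Ioo
    constructor <;> [linarith [Real.pi_pos]; linarith [Real.pi_pos]]
  have hC0 : ∀ u, 0 ≤ C u := fun u => le_trans (norm_nonneg _) (hfeas u)
  set t' := b j0 with ht'
  have hGsub : G ⊆ S.filter (fun j => t' ∈ T j) :=
    fun j hj => Finset.mem_filter.mpr ⟨hGS hj, hmem j hj⟩
  -- main feasibility-derived bound
  have hsum : Real.cos (φ/2) * ∑ j ∈ G, ‖s j‖ ≤ C t' := by
    have h1 : ∀ j, Real.cos (φ/2) * ‖s j‖
        ≤ (Complex.exp (-(↑(φ/2)) * Complex.I) * s j).re :=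
      fun j => rot_re hφ0 hφ (s j) (harg j).1 (harg j).2
    calc Real.cos (φ/2) * ∑ j ∈ G, ‖s j‖
        = ∑ j ∈ G, Real.cos (φ/2) * ‖s j‖ := Finset.mul_sum _ _ _
      _ ≤ ∑ j ∈ G, (Complex.exp (-(↑(φ/2)) * Complex.I) * s j).re :=
          Finset.sum_le_sum (fun j _ => h1 j)
      _ ≤ ∑ j ∈ S.filter (fun j => t' ∈ T j),
            (Complex.exp (-(↑(φ/2)) * Complex.I) * s j).re := by
          apply Finset.sum_le_sum_of_subset_of_nonneg hGsub
          intro j _ _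
          exact le_trans (mul_nonneg hcosp.le (norm_nonneg _)) (h1 j)
      _ = (Complex.exp (-(↑(φ/2)) * Complex.I)
            * ∑ j ∈ S.filter (fun j => t' ∈ T j), s j).re := by
          rw [Finset.mul_sum, Complex.re_sum]
      _ ≤ ‖Complex.exp (-(↑(φ/2)) * Complex.I)
            * ∑ j ∈ S.filter (fun j => t' ∈ T j), s j‖ := Complex.re_le_norm _
      _ = ‖∑ j ∈ S.filter (fun j => t' ∈ T j), s j‖ := by
          rw [norm_mul]
          rw [show (-(↑(φ/2)) : ℂ) = ((-(φ/2) : ℝ) : ℂ) by push_cast; ring]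
          rw [Complex.norm_exp_ofReal_mul_I, one_mul]
      _ ≤ C t' := hfeas t'
  have hδc : δ * C t' < ‖s j0‖ := hlarge j0 hj0
  have habs0 : 0 < ‖s j0‖ := lt_of_le_of_lt (mul_nonneg hδ.le (hC0 t')) hδc
  have hcpos : 0 < C t' := by
    have h2 : ‖s j0‖ ≤ ∑ j ∈ G, ‖s j‖ :=
      Finset.single_le_sum (fun j _ => norm_nonneg (s j)) hj0
    nlinarith
  have hlow : ∀ j ∈ G, δ ^ 2 * C t' ≤ ‖s j‖ := by
    intro j hj
    have h1 : δ * C t' < C (b j) :=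
      lt_of_lt_of_le hδc (le_trans (hNBA j0) (hCmin.2 ⟨b j, rfl⟩))
    nlinarith [hlarge j hj]
  have hsum2 : (G.card : ℝ) * (δ ^ 2 * C t') ≤ ∑ j ∈ G, ‖s j‖ := by
    have := Finset.card_nsmul_le_sum G (fun j => ‖s j‖) (δ ^ 2 * C t') hlow
    simpa [nsmul_eq_mul] using this
  have hfin : (G.card : ℝ) * (δ ^ 2 * Real.cos (φ/2)) ≤ 1 := by
    nlinarith
  have heq : (1 / δ ^ 2) * (1 / Real.cos (φ / 2)) = 1 / (δ ^ 2 * Real.cos (φ/2)) := by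
    rw [div_mul_div_comm, one_mul]
  rw [heq, le_div_iff₀ (by positivity)]
  linarith

open scoped Classical in
theorem delta_large_count (m N : ℕ) (s : Fin N → ℂ) (T : Fin N → Finset (Fin m))
    (C : Fin m → ℝ) (Cmin : ℝ) (hCmin : IsLeast (Set.range C) Cmin)
    (hNBA : ∀ j, ‖s j‖ ≤ Cmin)
    (hintv : ∀ j, ∃ t1 t2 : Fin m, T j = Finset.Icc t1 t2)
    (b : Fin N → Fin m) (hb : ∀ j, b j ∈ T j ∧ ∀ t ∈ T j, C (b j) ≤ C t)
    (φ δ : ℝ) (hφ0 : 0 ≤ φ) (hφ : φ ≤ Real.pi / 2) (hδ : 0 < δ)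
    (harg : ∀ j, 0 ≤ (s j).arg ∧ (s j).arg ≤ φ)
    (S : Finset (Fin N))
    (hfeas : ∀ t, ‖∑ j ∈ S.filter (fun j => t ∈ T j), s j‖ ≤ C t)
    (t : Fin m) :
    ((S.filter (fun j => t ∈ T j ∧ δ * C (b j) < ‖s j‖)).card : ℝ)
      ≤ 2 * ((⌊(1 / δ ^ 2) * (1 / Real.cos (φ / 2))⌋ : ℤ) : ℝ) := by
  set x := (1 / δ ^ 2) * (1 / Real.cos (φ / 2)) with hxdef
  have hcosp : 0 < Real.cos (φ / 2) := by
    apply Real.cos_pos_of_mem_Ioo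
    constructor <;> [linarith [Real.pi_pos]; linarith [Real.pi_pos]]
  have hxnn : 0 ≤ x := by rw [hxdef]; positivity
  have hfl0 : (0 : ℝ) ≤ ((⌊x⌋ : ℤ) : ℝ) := by
    have : (0 : ℤ) ≤ ⌊x⌋ := Int.le_floor.mpr (by exact_mod_cast hxnn)
    exact_mod_cast this
  set F := S.filter (fun j => t ∈ T j ∧ δ * C (b j) < ‖s j‖) with hFdef
  have hFmem : ∀ j ∈ F, j ∈ S ∧ t ∈ T j ∧ δ * C (b j) < ‖s j‖ := by
    intro j hj
    have := Finset.mem_filter.mp hj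
    exact ⟨this.1, this.2⟩
  set FL := F.filter (fun j => b j ≤ t) with hFL
  set FR := F.filter (fun j => t ≤ b j) with hFR
  have hcover : F ⊆ FL ∪ FR := by
    intro j hj
    rcases le_total (b j) t with h | h
    · exact Finset.mem_union_left _ (Finset.mem_filter.mpr ⟨hj, h⟩)
    · exact Finset.mem_union_right _ (Finset.mem_filter.mpr ⟨hj, h⟩)
  have hcard : F.card ≤ FL.card + FR.card :=
    le_trans (Finset.card_le_card hcover) (Finset.card_union_le _ _)
  -- bound for a group, given a suitable extremal element
  have hgrp : ∀ (G : Finset (Fin N)), G ⊆ F → ∀ j0 ∈ G, (∀ j ∈ G, b j0 ∈ T j) →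
      (G.card : ℝ) ≤ ((⌊x⌋ : ℤ) : ℝ) := by
    intro G hGF j0 hj0 hmem
    have hGS : G ⊆ S := fun j hj => (hFmem j (hGF hj)).1
    have hlarge : ∀ j ∈ G, δ * C (b j) < ‖s j‖ :=
      fun j hj => (hFmem j (hGF hj)).2.2
    have h1 : (G.card : ℝ) ≤ x :=
      group_bound hCmin hNBA hφ0 hφ hδ harg hfeas hGS hlarge hj0 hmem
    have h2 : ((G.card : ℕ) : ℤ) ≤ ⌊x⌋ := Int.le_floor.mpr (by exact_mod_cast h1)
    exact_mod_cast h2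
  -- left group
  have hFLb : (FL.card : ℝ) ≤ ((⌊x⌋ : ℤ) : ℝ) := by
    rcases FL.eq_empty_or_nonempty with he | hne
    · simp [he, hfl0]
    · obtain ⟨j0, hj0, hmax⟩ := Finset.exists_max_image FL b hne
      apply hgrp FL (Finset.filter_subset _ _) j0 hj0
      intro j hj
      obtain ⟨t1, t2, hT⟩ := hintv j
      have hjF := Finset.mem_filter.mp hj
      have htj : t ∈ T j := (hFmem j hjF.1).2.1
      have hbj : b j ∈ T j := (hb j).1
      have hj0t : b j0 ≤ t := (Finset.mem_filter.mp hj0).2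
      have hbb : b j ≤ b j0 := hmax j hj
      rw [hT] at htj hbj ⊢
      rw [Finset.mem_Icc] at htj hbj ⊢
      exact ⟨le_trans hbj.1 hbb, le_trans hj0t htj.2⟩
  -- right group
  have hFRb : (FR.card : ℝ) ≤ ((⌊x⌋ : ℤ) : ℝ) := by
    rcases FR.eq_empty_or_nonempty with he | hne
    · simp [he, hfl0]
    · obtain ⟨j0, hj0, hmin⟩ := Finset.exists_min_image FR b hne
      apply hgrp FR (Finset.filter_subset _ _) j0 hj0
      intro j hj
      obtain ⟨t1, t2, hT⟩ := hintv j
      have hjF := Finset.mem_filter.mp hj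
      have htj : t ∈ T j := (hFmem j hjF.1).2.1
      have hbj : b j ∈ T j := (hb j).1
      have hj0t : t ≤ b j0 := (Finset.mem_filter.mp hj0).2
      have hbb : b j0 ≤ b j := hmin j hj
      rw [hT] at htj hbj ⊢
      rw [Finset.mem_Icc] at htj hbj ⊢
      exact ⟨le_trans htj.1 hj0t, le_trans hbb hbj.2⟩
  have hcard' : (F.card : ℝ) ≤ (FL.card : ℝ) + (FR.card : ℝ) := by exact_mod_cast hcard
  linarith
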